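/- Let U and V be strongly continuous unitary representations of G on complex Hilbert spaces H_U and H_V which are disjoint, in the sense that the only bounded linear operator T : H_V → H_U with T ∘ V_x = U_x ∘ T for all x ∈ G is T = 0. Let ξ ∈ H_U be U-bounded and η ∈ H_V be V-bounded. Then for all ω ∈ H_U and ζ ∈ H_V, the function x ↦ conj(⟪V_x η, ζ⟫)·⟪U_x ξ, ω⟫ is integrable on G and ∫ conj(⟪V_x η, ζ⟫)·⟪U_x ξ, ω⟫ dx = 0; that is, the coefficient functions c_{ξω} and c_{ηζ} are orthogonal in L²(G). -/

import Mathlib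

open MeasureTheory
open scoped InnerProductSpace

/-- **first orthogonality relation.** If `U` and `V` are disjoint strongly
continuous unitary representations of `G`, `ξ` is `U`-bounded and `η` is `V`-bounded, then
for all `ω, ζ` the coefficient functions `c_{ξω}` and `c_{ηζ}` are orthogonal in `L²(G)`:
`x ↦ conj ⟪V_x η, ζ⟫ · ⟪U_x ξ, ω⟫` is integrable with integral `0`. -/
theorem stmt16
    {G : Type*} [Group G] [TopologicalSpace G] [IsTopologicalGroup G]
    [LocallyCompactSpace G] [MeasurableSpace G] [BorelSpace G]
    (μ : Measure G) [μ.IsHaarMeasure]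
    {HU : Type*} [NormedAddCommGroup HU] [InnerProductSpace ℂ HU] [CompleteSpace HU]
    {HV : Type*} [NormedAddCommGroup HV] [InnerProductSpace ℂ HV] [CompleteSpace HV]
    (U : G →* (HU ≃ₗᵢ[ℂ] HU)) (hU : ∀ ξ : HU, Continuous fun x => U x ξ)
    (V : G →* (HV ≃ₗᵢ[ℂ] HV)) (hV : ∀ ξ : HV, Continuous fun x => V x ξ)
    (hdisj : ∀ T : HV →L[ℂ] HU, (∀ (x : G) (v : HV), T (V x v) = U x (T v)) → T = 0)
    (ξ : HU) (kξ : ℝ)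
    (hξ : ∀ η : HU,
      MemLp (fun x => ⟪U x ξ, η⟫_ℂ) 2 μ ∧
      eLpNorm (fun x => ⟪U x ξ, η⟫_ℂ) 2 μ ≤ ENNReal.ofReal (kξ * ‖η‖))
    (η : HV) (kη : ℝ)
    (hη : ∀ ζ : HV,
      MemLp (fun x => ⟪V x η, ζ⟫_ℂ) 2 μ ∧
      eLpNorm (fun x => ⟪V x η, ζ⟫_ℂ) 2 μ ≤ ENNReal.ofReal (kη * ‖ζ‖)) :
    ∀ (ω : HU) (ζ : HV),
      Integrable (fun x => (starRingEnd ℂ) ⟪V x η, ζ⟫_ℂ * ⟪U x ξ, ω⟫_ℂ) μ ∧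
      ∫ x, (starRingEnd ℂ) ⟪V x η, ζ⟫_ℂ * ⟪U x ξ, ω⟫_ℂ ∂μ = 0 := by
  -- L² representatives of the coefficient functions
  let F : HU → Lp ℂ 2 μ := fun ω => ((hξ ω).1).toLp _
  let Gf : HV → Lp ℂ 2 μ := fun ζ => ((hη ζ).1).toLp _
  have hFG : ∀ (ζ : HV) (ω : HU),
      (fun x => (starRingEnd ℂ) ⟪V x η, ζ⟫_ℂ * ⟪U x ξ, ω⟫_ℂ) =ᵐ[μ]
      fun x => ⟪(Gf ζ : G → ℂ) x, (F ω : G → ℂ) x⟫_ℂ := by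
    intro ζ ω
    filter_upwards [(hη ζ).1.coeFn_toLp, (hξ ω).1.coeFn_toLp] with x h1 h2
    rw [RCLike.inner_apply, h1, h2, mul_comm]
  have hInt : ∀ (ζ : HV) (ω : HU),
      Integrable (fun x => (starRingEnd ℂ) ⟪V x η, ζ⟫_ℂ * ⟪U x ξ, ω⟫_ℂ) μ := fun ζ ω =>
    (L2.integrable_inner (𝕜 := ℂ) (Gf ζ) (F ω)).congr (hFG ζ ω).symm
  have hII : ∀ (ζ : HV) (ω : HU),
      ∫ x, (starRingEnd ℂ) ⟪V x η, ζ⟫_ℂ * ⟪U x ξ, ω⟫_ℂ ∂μ = ⟪Gf ζ, F ω⟫_ℂ := by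
    intro ζ ω
    rw [L2.inner_def]
    exact integral_congr_ae (hFG ζ ω)
  -- norm bounds
  have hFn : ∀ ω : HU, ‖F ω‖ ≤ |kξ| * ‖ω‖ := by
    intro ω
    rw [Lp.norm_toLp]
    have h2 : eLpNorm (fun x => ⟪U x ξ, ω⟫_ℂ) 2 μ ≤ ENNReal.ofReal (|kξ| * ‖ω‖) :=
      (hξ ω).2.trans (ENNReal.ofReal_le_ofReal
        (mul_le_mul_of_nonneg_right (le_abs_self _) (norm_nonneg _)))
    calc (eLpNorm (fun x => ⟪U x ξ, ω⟫_ℂ) 2 μ).toReal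
        ≤ (ENNReal.ofReal (|kξ| * ‖ω‖)).toReal :=
          ENNReal.toReal_mono ENNReal.ofReal_ne_top h2
      _ = |kξ| * ‖ω‖ := ENNReal.toReal_ofReal (by positivity)
  have hGn : ∀ ζ : HV, ‖Gf ζ‖ ≤ |kη| * ‖ζ‖ := by
    intro ζ
    rw [Lp.norm_toLp]
    have h2 : eLpNorm (fun x => ⟪V x η, ζ⟫_ℂ) 2 μ ≤ ENNReal.ofReal (|kη| * ‖ζ‖) :=
      (hη ζ).2.trans (ENNReal.ofReal_le_ofReal
        (mul_le_mul_of_nonneg_right (le_abs_self _) (norm_nonneg _)))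
    calc (eLpNorm (fun x => ⟪V x η, ζ⟫_ℂ) 2 μ).toReal
        ≤ (ENNReal.ofReal (|kη| * ‖ζ‖)).toReal :=
          ENNReal.toReal_mono ENNReal.ofReal_ne_top h2
      _ = |kη| * ‖ζ‖ := ENNReal.toReal_ofReal (by positivity)
  have hbound : ∀ (ζ : HV) (ω : HU), ‖(⟪Gf ζ, F ω⟫_ℂ : ℂ)‖ ≤ |kη| * |kξ| * ‖ζ‖ * ‖ω‖ := by
    intro ζ ω
    calc ‖(⟪Gf ζ, F ω⟫_ℂ : ℂ)‖ ≤ ‖Gf ζ‖ * ‖F ω‖ := norm_inner_le_norm _ _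
      _ ≤ (|kη| * ‖ζ‖) * (|kξ| * ‖ω‖) :=
          mul_le_mul (hGn ζ) (hFn ω) (norm_nonneg _) (by positivity)
      _ = |kη| * |kξ| * ‖ζ‖ * ‖ω‖ := by ring
  -- linearity in ω (via the integral representation)
  have hadd : ∀ (ζ : HV) (ω ω' : HU), (⟪Gf ζ, F (ω + ω')⟫_ℂ : ℂ) = ⟪Gf ζ, F ω⟫_ℂ + ⟪Gf ζ, F ω'⟫_ℂ := by
    intro ζ ω ω'
    rw [← hII, ← hII, ← hII, ← integral_add (hInt ζ ω) (hInt ζ ω')]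
    refine integral_congr_ae (ae_of_all _ fun x => ?_)
    simp [inner_add_right, mul_add]
  have hsmul : ∀ (c : ℂ) (ζ : HV) (ω : HU), (⟪Gf ζ, F (c • ω)⟫_ℂ : ℂ) = c * ⟪Gf ζ, F ω⟫_ℂ := by
    intro c ζ ω
    rw [← hII, ← hII, ← integral_const_mul]
    refine integral_congr_ae (ae_of_all _ fun x => ?_)
    simp only [inner_smul_right]
    ring
  -- the Riesz-represented operator
  let L : HV → HU →L[ℂ] ℂ := fun ζ => LinearMap.mkContinuous
    { toFun := fun ω => ⟪Gf ζ, F ω⟫_ℂ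
      map_add' := hadd ζ
      map_smul' := fun c ω => hsmul c ζ ω }
    (|kη| * |kξ| * ‖ζ‖) (fun ω => by
      simpa [mul_assoc] using hbound ζ ω)
  let Tv : HV → HU := fun ζ => (InnerProductSpace.toDual ℂ HU).symm (L ζ)
  have hTv : ∀ (ζ : HV) (ω : HU),
      (⟪Tv ζ, ω⟫_ℂ : ℂ) = ∫ x, (starRingEnd ℂ) ⟪V x η, ζ⟫_ℂ * ⟪U x ξ, ω⟫_ℂ ∂μ := by
    intro ζ ω
    rw [InnerProductSpace.toDual_symm_apply, hII]
    rfl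
  have hTadd : ∀ ζ ζ' : HV, Tv (ζ + ζ') = Tv ζ + Tv ζ' := by
    intro ζ ζ'
    refine ext_inner_right ℂ fun ω => ?_
    rw [inner_add_left, hTv, hTv, hTv, ← integral_add (hInt ζ ω) (hInt ζ' ω)]
    refine integral_congr_ae (ae_of_all _ fun x => ?_)
    simp [inner_add_right, map_add, add_mul]
  have hTsmul : ∀ (c : ℂ) (ζ : HV), Tv (c • ζ) = c • Tv ζ := by
    intro c ζ
    refine ext_inner_right ℂ fun ω => ?_
    rw [inner_smul_left, hTv, hTv, ← integral_const_mul]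
    refine integral_congr_ae (ae_of_all _ fun x => ?_)
    simp only [inner_smul_right, map_mul]
    ring
  have hTnorm : ∀ ζ : HV, ‖Tv ζ‖ ≤ |kη| * |kξ| * ‖ζ‖ := by
    intro ζ
    have h1 : ‖Tv ζ‖ = ‖L ζ‖ := (InnerProductSpace.toDual ℂ HU).symm.norm_map _
    rw [h1]
    exact LinearMap.mkContinuous_norm_le _ (by positivity) _
  let T : HV →L[ℂ] HU := LinearMap.mkContinuous
    { toFun := Tv
      map_add' := hTadd
      map_smul' := fun c ζ => hTsmul c ζ }
    (|kη| * |kξ|) (fun ζ => by simpa [mul_assoc] using hTnorm ζ)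
  -- T intertwines V and U
  have hTcomm : ∀ (y : G) (v : HV), T (V y v) = U y (T v) := by
    intro y ζ
    refine ext_inner_right ℂ fun ω => ?_
    have hUy : (⟪U y (Tv ζ), ω⟫_ℂ : ℂ) = ⟪Tv ζ, (U y).symm ω⟫_ℂ := by
      conv_lhs => rw [show ω = U y ((U y).symm ω) from ((U y).apply_symm_apply ω).symm]
      exact (U y).inner_map_map _ _
    show (⟪Tv (V y ζ), ω⟫_ℂ : ℂ) = ⟪U y (Tv ζ), ω⟫_ℂ
    rw [hUy, hTv, hTv]
    have hVs : ∀ x : G, (V x) η = (V y) ((V (y⁻¹ * x)) η) := by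
      intro x
      have h : V y * V (y⁻¹ * x) = V x := by rw [← map_mul]; congr 1; group
      rw [← h]
      rfl
    calc ∫ x, (starRingEnd ℂ) ⟪V x η, V y ζ⟫_ℂ * ⟪U x ξ, ω⟫_ℂ ∂μ
        = ∫ x, (starRingEnd ℂ) ⟪V (y⁻¹ * x) η, ζ⟫_ℂ * ⟪U x ξ, ω⟫_ℂ ∂μ := by
          refine integral_congr_ae (ae_of_all _ fun x => ?_)
          dsimp only
          rw [hVs x, (V y).inner_map_map]
      _ = ∫ x, (starRingEnd ℂ) ⟪V (y⁻¹ * (y * x)) η, ζ⟫_ℂ * ⟪U (y * x) ξ, ω⟫_ℂ ∂μ :=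
          (integral_mul_left_eq_self
            (fun x => (starRingEnd ℂ) ⟪V (y⁻¹ * x) η, ζ⟫_ℂ * ⟪U x ξ, ω⟫_ℂ) y).symm
      _ = ∫ x, (starRingEnd ℂ) ⟪V x η, ζ⟫_ℂ * ⟪U x ξ, (U y).symm ω⟫_ℂ ∂μ := by
          refine integral_congr_ae (ae_of_all _ fun x => ?_)
          dsimp only
          have e1 : y⁻¹ * (y * x) = x := by group
          have e2 : (⟪U (y * x) ξ, ω⟫_ℂ : ℂ) = ⟪U x ξ, (U y).symm ω⟫_ℂ := by
            have h : U (y * x) ξ = U y (U x ξ) := by rw [map_mul]; rfl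
            rw [h]
            conv_lhs => rw [show ω = U y ((U y).symm ω) from ((U y).apply_symm_apply ω).symm]
            exact (U y).inner_map_map _ _
          rw [e1, e2]
  have hT0 : T = 0 := hdisj T hTcomm
  intro ω ζ
  refine ⟨hInt ζ ω, ?_⟩
  have h := hTv ζ ω
  have hz : Tv ζ = 0 := by
    have : T ζ = Tv ζ := rfl
    rw [hT0] at this
    simpa using this.symm
  rw [hz] at h
  simpa using h.symm
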